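/- Let V be a finite-dimensional real inner product space, Ω ⊆ V a nonempty proper open convex cone, and H ⊆ V a linear subspace with H ∩ closure(Ω) = {0} and orthogonal complement H^⊥. Then closure(H^⊥ ∩ (Ω + H)) = H^⊥ ∩ closure(Ω + H) = H^⊥ ∩ (closure(Ω) + H). -/

import Mathlib

open Set Filter
open scoped Pointwise RealInnerProductSpace Topology

/-- A subset `C` of a real vector space is a cone if `t • x ∈ C` for all `x ∈ C`, `t > 0`. -/
def IsCone {V : Type*} [AddCommGroup V] [Module ℝ V] (C : Set V) : Prop :=
  ∀ x ∈ C, ∀ t : ℝ, 0 < t → t • x ∈ C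

/-- The open dual cone of an open cone `Ω` with respect to the inner product. -/
def openDualCone {V : Type*} [NormedAddCommGroup V] [InnerProductSpace ℝ V] (Ω : Set V) :
    Set V :=
  {v | ∀ ω ∈ closure Ω, ω ≠ 0 → 0 < ⟪v, ω⟫}

lemma isCone_closure {V : Type*} [NormedAddCommGroup V] [InnerProductSpace ℝ V]
    {Ω : Set V} (hcone : IsCone Ω) : IsCone (closure Ω) := by
  intro x hx t ht
  exact map_mem_closure (continuous_const_smul t) hx (fun y hy => hcone y hy t ht)

lemma add_mem_closure_add {V : Type*} [NormedAddCommGroup V] [InnerProductSpace ℝ V]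
    {Ω : Set V} (hopen : IsOpen Ω) (hconv : Convex ℝ Ω) (hcone : IsCone Ω)
    {w ω : V} (hw : w ∈ closure Ω) (hω : ω ∈ Ω) : w + ω ∈ Ω := by
  obtain ⟨ε, hε, hball⟩ := Metric.isOpen_iff.mp hopen ω hω
  obtain ⟨w', hw'Ω, hdist⟩ := Metric.mem_closure_iff.mp hw ε hε
  have h1 : ω + w - w' ∈ Ω := by
    apply hball
    rw [Metric.mem_ball, dist_eq_norm, show ω + w - w' - ω = w - w' by abel]
    rwa [dist_eq_norm] at hdist
  -- Ω + Ω ⊆ Ω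
  have hsum : ∀ a ∈ Ω, ∀ b ∈ Ω, a + b ∈ Ω := by
    intro a ha b hb
    have hmid : (1/2 : ℝ) • a + (1/2 : ℝ) • b ∈ Ω :=
      hconv ha hb (by norm_num) (by norm_num) (by norm_num)
    have := hcone _ hmid 2 (by norm_num)
    rwa [smul_add, smul_smul, smul_smul, (by norm_num : (2:ℝ) * (1/2) = 1),
      one_smul, one_smul] at this
  have := hsum w' hw'Ω _ h1
  rwa [show w' + (ω + w - w') = w + ω by abel] at this

lemma isClosed_coneAdd {V : Type*} [NormedAddCommGroup V] [InnerProductSpace ℝ V]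
    [FiniteDimensional ℝ V]
    {S : Set V} (hS : IsClosed S) (hScone : IsCone S) (h0 : (0:V) ∈ S)
    (H : Submodule ℝ V) (hdisj : (H : Set V) ∩ S = {0}) :
    IsClosed (S + (H : Set V)) := by
  apply IsSeqClosed.isClosed
  intro x z hmem hlim
  have := fun n => Set.mem_add.mp (hmem n)
  choose w hwS h hhH hsum using this
  set t : ℕ → ℝ := fun n => (1 + ‖w n‖)⁻¹ with ht_def
  have htpos : ∀ n, 0 < t n := fun n => by positivity
  have htle : ∀ n, t n ≤ 1 := fun n => by
    rw [ht_def]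
    rw [inv_le_one_iff₀]
    right; linarith [norm_nonneg (w n)]
  set u : ℕ → V := fun n => t n • w n with hu_def
  have huS : ∀ n, u n ∈ S := fun n => hScone _ (hwS n) _ (htpos n)
  have hunorm : ∀ n, ‖u n‖ = 1 - t n := by
    intro n
    rw [hu_def]
    simp only [norm_smul, Real.norm_eq_abs, abs_of_pos (htpos n)]
    rw [ht_def]
    field_simp; ring
  have huball : ∀ n, u n ∈ Metric.closedBall (0:V) 1 := by
    intro n
    rw [Metric.mem_closedBall, dist_zero_right, hunorm n]
    linarith [(htpos n)]
  have hKcomp : IsCompact ((Set.Icc (0:ℝ) 1) ×ˢ (S ∩ Metric.closedBall (0:V) 1)) :=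
    isCompact_Icc.prod ((isCompact_closedBall 0 1).inter_left hS)
  have hpK : ∀ n, ((t n, u n) : ℝ × V) ∈ (Set.Icc (0:ℝ) 1) ×ˢ (S ∩ Metric.closedBall (0:V) 1) :=
    fun n => ⟨⟨(htpos n).le, htle n⟩, huS n, huball n⟩
  obtain ⟨⟨t0, u0⟩, hK0, φ, hφ, hconv⟩ := hKcomp.tendsto_subseq hpK
  have ht0mem : t0 ∈ Set.Icc (0:ℝ) 1 := hK0.1
  have hu0S : u0 ∈ S := hK0.2.1
  have htt : Tendsto (fun n => t (φ n)) atTop (𝓝 t0) :=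
    (continuous_fst.continuousAt.tendsto).comp hconv
  have htu : Tendsto (fun n => u (φ n)) atTop (𝓝 u0) :=
    (continuous_snd.continuousAt.tendsto).comp hconv
  have hxφ : Tendsto (fun n => x (φ n)) atTop (𝓝 z) := hlim.comp hφ.tendsto_atTop
  -- the scaled H-components converge
  have hhlim : Tendsto (fun n => t (φ n) • x (φ n) - u (φ n)) atTop (𝓝 (t0 • z - u0)) :=
    (htt.smul hxφ).sub htu
  have hHclosed : IsClosed (H : Set V) := H.closed_of_finiteDimensional
  have hmemH : t0 • z - u0 ∈ (H : Set V) := by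
    refine hHclosed.mem_of_tendsto hhlim (Eventually.of_forall fun n => ?_)
    have : t (φ n) • x (φ n) - u (φ n) = t (φ n) • h (φ n) := by
      rw [hu_def, ← hsum (φ n)]
      simp [smul_add]
    rw [this]
    exact H.smul_mem _ (hhH (φ n))
  by_cases ht0 : t0 = 0
  · -- contradiction
    exfalso
    have hnorm1 : ‖u0‖ = 1 := by
      have h1 : Tendsto (fun n => ‖u (φ n)‖) atTop (𝓝 ‖u0‖) := htu.norm
      have h2 : Tendsto (fun n => ‖u (φ n)‖) atTop (𝓝 (1 - t0)) := by
        simp only [hunorm]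
        exact tendsto_const_nhds.sub htt
      rw [tendsto_nhds_unique h1 h2, ht0, sub_zero]
    have : u0 ∈ (H : Set V) ∩ S := by
      constructor
      · have := H.neg_mem hmemH
        rwa [ht0, zero_smul, zero_sub, neg_neg] at this
      · exact hu0S
    rw [hdisj] at this
    simp only [Set.mem_singleton_iff] at this
    rw [this, norm_zero] at hnorm1
    norm_num at hnorm1
  · have ht0pos : 0 < t0 := lt_of_le_of_ne ht0mem.1 (Ne.symm ht0)
    have hwlim : Tendsto (fun n => w (φ n)) atTop (𝓝 (t0⁻¹ • u0)) := by
      have : Tendsto (fun n => (t (φ n))⁻¹ • u (φ n)) atTop (𝓝 (t0⁻¹ • u0)) :=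
        (htt.inv₀ ht0).smul htu
      convert this using 2 with n
      rw [hu_def, inv_smul_smul₀ (htpos (φ n)).ne']
    have hw0S : t0⁻¹ • u0 ∈ S := hScone _ hu0S _ (by positivity)
    have hhlim2 : Tendsto (fun n => x (φ n) - w (φ n)) atTop (𝓝 (z - t0⁻¹ • u0)) :=
      hxφ.sub hwlim
    have hzH : z - t0⁻¹ • u0 ∈ (H : Set V) := by
      refine hHclosed.mem_of_tendsto hhlim2 (Eventually.of_forall fun n => ?_)
      have : x (φ n) - w (φ n) = h (φ n) := by rw [← hsum (φ n)]; abel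
      rw [this]; exact hhH (φ n)
    exact Set.mem_add.mpr ⟨t0⁻¹ • u0, hw0S, z - t0⁻¹ • u0, hzH, by abel⟩

theorem stmt_15 {V : Type*} [NormedAddCommGroup V] [InnerProductSpace ℝ V]
    [FiniteDimensional ℝ V]
    (Ω : Set V) (hne : Ω.Nonempty) (hopen : IsOpen Ω) (hconv : Convex ℝ Ω)
    (hcone : IsCone Ω) (hproper : closure Ω ∩ -closure Ω = {0})
    (H : Submodule ℝ V) (hH : (H : Set V) ∩ closure Ω = {0}) :
    closure ((Hᗮ : Set V) ∩ (Ω + (H : Set V)))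
        = (Hᗮ : Set V) ∩ closure (Ω + (H : Set V)) ∧
      closure ((Hᗮ : Set V) ∩ (Ω + (H : Set V)))
        = (Hᗮ : Set V) ∩ (closure Ω + (H : Set V)) := by
  obtain ⟨ω₀, hω₀⟩ := hne
  have h0cl : (0 : V) ∈ closure Ω := by
    refine mem_closure_of_tendsto (b := atTop) (f := fun n : ℕ => ((n:ℝ)+1)⁻¹ • ω₀) ?_
      (Eventually.of_forall fun n => hcone _ hω₀ _ (by positivity))
    have : Tendsto (fun n : ℕ => ((n:ℝ)+1)⁻¹) atTop (𝓝 0) := by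
      simpa [one_div] using tendsto_one_div_add_atTop_nhds_zero_nat (𝕜 := ℝ)
    simpa using this.smul_const ω₀
  have hclcone : IsCone (closure Ω) := isCone_closure hcone
  have hclS : IsClosed (closure Ω) := isClosed_closure
  -- Step 1 : closure (Ω + H) = closure Ω + H
  have hFclosed : IsClosed (closure Ω + (H : Set V)) :=
    isClosed_coneAdd hclS hclcone h0cl H hH
  have hstep1 : closure (Ω + (H : Set V)) = closure Ω + (H : Set V) := by
    apply le_antisymm
    · apply closure_minimal _ hFclosed
      exact Set.add_subset_add_right subset_closure
    · rintro x hx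
      obtain ⟨ww, hw, hh, hhm, rfl⟩ := Set.mem_add.mp hx
      exact map_mem_closure (f := (· + hh)) (continuous_add_right hh) hw
        (fun y hy => Set.mem_add.mpr ⟨y, hy, hh, hhm, rfl⟩)
  -- Step 2 : left equality
  have hHbclosed : IsClosed ((Hᗮ : Set V)) := Hᗮ.closed_of_finiteDimensional
  have hstep2 : closure ((Hᗮ : Set V) ∩ (Ω + (H : Set V)))
      = (Hᗮ : Set V) ∩ (closure Ω + (H : Set V)) := by
    apply le_antisymm
    · calc closure ((Hᗮ : Set V) ∩ (Ω + (H : Set V)))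
          ⊆ closure (Hᗮ : Set V) ∩ closure (Ω + (H : Set V)) :=
            closure_inter_subset_inter_closure _ _
        _ = (Hᗮ : Set V) ∩ (closure Ω + (H : Set V)) := by
            rw [hHbclosed.closure_eq, hstep1]
    · rintro x ⟨hxperp, hxmem⟩
      obtain ⟨ww, hw, hh, hhm, rfl⟩ := Set.mem_add.mp hxmem
      -- approximating sequence
      set p : V := (H.orthogonalProjectionOnto ω₀ : V) with hp_def
      have hpH : p ∈ H := (H.orthogonalProjectionOnto ω₀).2
      have hqperp : ω₀ - p ∈ Hᗮ := H.sub_starProjection_mem_orthogonal ω₀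
      refine mem_closure_of_tendsto
        (b := atTop) (f := fun n : ℕ => (ww + hh) + ((n:ℝ)+1)⁻¹ • (ω₀ - p)) ?_
        (Eventually.of_forall fun n => ?_)
      · have : Tendsto (fun n : ℕ => ((n:ℝ)+1)⁻¹) atTop (𝓝 0) := by
          simpa [one_div] using tendsto_one_div_add_atTop_nhds_zero_nat (𝕜 := ℝ)
        have := this.smul_const (ω₀ - p)
        rw [zero_smul] at this
        simpa using (tendsto_const_nhds.add this)
      · set ε : ℝ := ((n:ℝ)+1)⁻¹ with hε_def
        have hεpos : 0 < ε := by rw [hε_def]; positivity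
        constructor
        · exact Hᗮ.add_mem hxperp (Hᗮ.smul_mem _ hqperp)
        · have hωε : ε • ω₀ ∈ Ω := hcone _ hω₀ _ hεpos
          have hwΩ : ww + ε • ω₀ ∈ Ω := add_mem_closure_add hopen hconv hcone hw hωε
          refine Set.mem_add.mpr ⟨ww + ε • ω₀, hwΩ, hh - ε • p,
            H.sub_mem hhm (H.smul_mem _ hpH), ?_⟩
          simp only [hε_def, smul_sub]; abel
  exact ⟨by rw [hstep2, hstep1], hstep2⟩
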